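/- Let Θ be a finite set and Γ a finite index set. Define V(y) = λ·Σ_γ φ_γ·log(ε_γ + Σ_θ α_γ(θ)·e^{y(θ)}·v_γ(θ)) − Σ_θ τ(θ)·ρ(θ)·y(θ) + Σ_θ τ(θ)·e^{y(θ)} on the set Y = {y : y(θ) ≤ log ρ(θ) for all θ}. Then V is strictly convex on Y. -/

import Mathlib

open Finset Real

variable {Θ Γ : Type*} [Fintype Θ] [Fintype Γ]

noncomputable def V (lam : ℝ) (φ ε : Γ → ℝ) (α v : Γ → Θ → ℝ) (τ ρ : Θ → ℝ)
    (y : Θ → ℝ) : ℝ :=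
  lam * ∑ γ : Γ, φ γ * Real.log (ε γ + ∑ θ : Θ, α γ θ * Real.exp (y θ) * v γ θ)
    - ∑ θ : Θ, τ θ * ρ θ * y θ + ∑ θ : Θ, τ θ * Real.exp (y θ)

/-- Convexity of `y ↦ log (ε + ∑ c θ * exp (y θ))`. -/
lemma logsum_convexOn (e : ℝ) (he : 0 < e) (c : Θ → ℝ) (hc : ∀ θ, 0 < c θ) :
    ConvexOn ℝ Set.univ (fun y : Θ → ℝ => Real.log (e + ∑ θ : Θ, c θ * Real.exp (y θ))) := by
  refine ⟨convex_univ, fun x _ z _ a b ha hb hab => ?_⟩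
  set A : ℝ := e + ∑ θ : Θ, c θ * Real.exp (x θ) with hA
  set B : ℝ := e + ∑ θ : Θ, c θ * Real.exp (z θ) with hB
  have hApos : 0 < A := by
    have : 0 ≤ ∑ θ : Θ, c θ * Real.exp (x θ) :=
      Finset.sum_nonneg fun θ _ => le_of_lt (mul_pos (hc θ) (Real.exp_pos _))
    linarith
  have hBpos : 0 < B := by
    have : 0 ≤ ∑ θ : Θ, c θ * Real.exp (z θ) :=
      Finset.sum_nonneg fun θ _ => le_of_lt (mul_pos (hc θ) (Real.exp_pos _))
    linarith
  have key : ∀ p q : ℝ, 0 < p → 0 < q →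
      p ^ a * q ^ b ≤ A ^ a * B ^ b * (a * (p / A) + b * (q / B)) := by
    intro p q hp hq
    have h1 : p ^ a * q ^ b = A ^ a * B ^ b * ((p / A) ^ a * (q / B) ^ b) := by
      rw [Real.div_rpow hp.le hApos.le, Real.div_rpow hq.le hBpos.le]
      field_simp [ne_of_gt (Real.rpow_pos_of_pos hApos a),
        ne_of_gt (Real.rpow_pos_of_pos hBpos b)]
    rw [h1]
    have := Real.geom_mean_le_arith_mean2_weighted ha hb
      (div_nonneg hp.le hApos.le) (div_nonneg hq.le hBpos.le) hab
    exact mul_le_mul_of_nonneg_left this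
      (mul_nonneg (Real.rpow_nonneg hApos.le a) (Real.rpow_nonneg hBpos.le b))
  have hmain : e + ∑ θ : Θ, c θ * Real.exp ((a • x + b • z) θ) ≤ A ^ a * B ^ b := by
    have hterm : ∀ θ : Θ, c θ * Real.exp ((a • x + b • z) θ)
        = (c θ * Real.exp (x θ)) ^ a * (c θ * Real.exp (z θ)) ^ b := by
      intro θ
      have hc1 : c θ = c θ ^ a * c θ ^ b := by
        rw [← Real.rpow_add (hc θ), hab, Real.rpow_one]
      have hy : (a • x + b • z) θ = x θ * a + z θ * b := by
        simp only [Pi.add_apply, Pi.smul_apply, smul_eq_mul]; ring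
      rw [hy, Real.exp_add, Real.mul_rpow (hc θ).le (Real.exp_pos _).le,
        Real.mul_rpow (hc θ).le (Real.exp_pos _).le, ← Real.exp_mul, ← Real.exp_mul]
      nth_rewrite 1 [hc1]
      ring
    have he1 : e = e ^ a * e ^ b := by
      rw [← Real.rpow_add he, hab, Real.rpow_one]
    calc e + ∑ θ : Θ, c θ * Real.exp ((a • x + b • z) θ)
        = e ^ a * e ^ b + ∑ θ : Θ, (c θ * Real.exp (x θ)) ^ a * (c θ * Real.exp (z θ)) ^ b := by
          rw [← he1]; exact congrArg _ (Finset.sum_congr rfl fun θ _ => hterm θ)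
      _ ≤ A ^ a * B ^ b * (a * (e / A) + b * (e / B))
          + ∑ θ : Θ, A ^ a * B ^ b *
            (a * (c θ * Real.exp (x θ) / A) + b * (c θ * Real.exp (z θ) / B)) := by
          refine add_le_add (key _ _ he he) (Finset.sum_le_sum fun θ _ => key _ _
            (mul_pos (hc θ) (Real.exp_pos _)) (mul_pos (hc θ) (Real.exp_pos _)))
      _ = A ^ a * B ^ b * ((a / A) * A + (b / B) * B) := by
          have : ∀ θ : Θ, A ^ a * B ^ b *
              (a * (c θ * Real.exp (x θ) / A) + b * (c θ * Real.exp (z θ) / B))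
              = (A ^ a * B ^ b * (a / A)) * (c θ * Real.exp (x θ))
                + (A ^ a * B ^ b * (b / B)) * (c θ * Real.exp (z θ)) := by
            intro θ; ring
          rw [Finset.sum_congr rfl fun θ _ => this θ, Finset.sum_add_distrib,
            ← Finset.mul_sum, ← Finset.mul_sum, hA, hB]
          ring
      _ = A ^ a * B ^ b := by
          rw [div_mul_cancel₀ _ (ne_of_gt hApos), div_mul_cancel₀ _ (ne_of_gt hBpos), hab,
            mul_one]
  have hpos : 0 < e + ∑ θ : Θ, c θ * Real.exp ((a • x + b • z) θ) := by
    have : 0 ≤ ∑ θ : Θ, c θ * Real.exp ((a • x + b • z) θ) :=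
      Finset.sum_nonneg fun θ _ => le_of_lt (mul_pos (hc θ) (Real.exp_pos _))
    linarith
  calc Real.log (e + ∑ θ : Θ, c θ * Real.exp ((a • x + b • z) θ))
      ≤ Real.log (A ^ a * B ^ b) := Real.log_le_log hpos hmain
    _ = a * Real.log A + b * Real.log B := by
        rw [Real.log_mul (ne_of_gt (Real.rpow_pos_of_pos hApos a))
          (ne_of_gt (Real.rpow_pos_of_pos hBpos b)), Real.log_rpow hApos, Real.log_rpow hBpos]
    _ = a • Real.log A + b • Real.log B := by simp [smul_eq_mul]

lemma convexOn_finset_sum {E : Type*} [AddCommGroup E] [Module ℝ E] {ι : Type*}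
    (t : Finset ι) {s : Set E} (hs : Convex ℝ s) {f : ι → E → ℝ}
    (hf : ∀ i ∈ t, ConvexOn ℝ s (f i)) :
    ConvexOn ℝ s (fun x => ∑ i ∈ t, f i x) := by
  classical
  induction t using Finset.induction_on with
  | empty => simpa using convexOn_const 0 hs
  | insert _ _ hnot ih =>
    rename_i i t'
    simp only [Finset.sum_insert hnot]
    exact (hf i (Finset.mem_insert_self i t')).add
      (ih fun j hj => hf j (Finset.mem_insert_of_mem hj))

theorem V_strictConvexOn (lam : ℝ) (φ ε : Γ → ℝ) (α v : Γ → Θ → ℝ) (τ ρ : Θ → ℝ)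
    (hlam : 0 < lam) (hφ : ∀ γ, 0 < φ γ) (hε : ∀ γ, 0 < ε γ)
    (hα : ∀ γ θ, 0 < α γ θ) (hv : ∀ γ θ, 0 < v γ θ)
    (hτ : ∀ θ, 0 < τ θ) (hρ : ∀ θ, 0 < ρ θ) :
    StrictConvexOn ℝ {y : Θ → ℝ | ∀ θ, y θ ≤ Real.log (ρ θ)}
      (V lam φ ε α v τ ρ) := by
  set s : Set (Θ → ℝ) := {y : Θ → ℝ | ∀ θ, y θ ≤ Real.log (ρ θ)} with hs_def
  have hs : Convex ℝ s := by
    intro x hx z hz a b ha hb hab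
    intro θ
    calc (a • x + b • z) θ = a * x θ + b * z θ := by
          simp [Pi.add_apply, Pi.smul_apply, smul_eq_mul]
      _ ≤ a * Real.log (ρ θ) + b * Real.log (ρ θ) := by
          gcongr <;> [exact hx θ; exact hz θ]
      _ = Real.log (ρ θ) := by rw [← add_mul, hab, one_mul]
  -- convex part
  have h1 : ConvexOn ℝ s
      (fun y : Θ → ℝ => lam * ∑ γ : Γ, φ γ *
        Real.log (ε γ + ∑ θ : Θ, α γ θ * Real.exp (y θ) * v γ θ)) := by
    have hsum : ConvexOn ℝ s (fun y : Θ → ℝ => ∑ γ : Γ, φ γ *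
        Real.log (ε γ + ∑ θ : Θ, α γ θ * Real.exp (y θ) * v γ θ)) := by
      refine convexOn_finset_sum Finset.univ hs fun γ _ => ?_
      have hγ : ConvexOn ℝ Set.univ (fun y : Θ → ℝ =>
          Real.log (ε γ + ∑ θ : Θ, (α γ θ * v γ θ) * Real.exp (y θ))) :=
        logsum_convexOn (ε γ) (hε γ) (fun θ => α γ θ * v γ θ)
          (fun θ => mul_pos (hα γ θ) (hv γ θ))
      have heq : (fun y : Θ → ℝ =>
          Real.log (ε γ + ∑ θ : Θ, (α γ θ * v γ θ) * Real.exp (y θ)))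
          = fun y : Θ → ℝ =>
            Real.log (ε γ + ∑ θ : Θ, α γ θ * Real.exp (y θ) * v γ θ) := by
        funext y
        congr 1
        congr 1
        exact Finset.sum_congr rfl fun θ _ => by ring
      have := (heq ▸ hγ).subset (Set.subset_univ s) hs
      simpa [smul_eq_mul] using this.smul (hφ γ).le
    simpa [smul_eq_mul] using hsum.smul hlam.le
  -- linear part
  have h2 : ConvexOn ℝ s (fun y : Θ → ℝ => -∑ θ : Θ, τ θ * ρ θ * y θ) := by
    refine ⟨hs, fun x _ z _ a b ha hb hab => le_of_eq ?_⟩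
    simp only [Pi.add_apply, Pi.smul_apply, smul_eq_mul]
    have hterm : ∀ θ : Θ, τ θ * ρ θ * (a * x θ + b * z θ)
        = a * (τ θ * ρ θ * x θ) + b * (τ θ * ρ θ * z θ) := fun θ => by ring
    rw [Finset.sum_congr rfl fun θ _ => hterm θ, Finset.sum_add_distrib,
      ← Finset.mul_sum, ← Finset.mul_sum]
    ring
  -- strictly convex part
  have h3 : StrictConvexOn ℝ s (fun y : Θ → ℝ => ∑ θ : Θ, τ θ * Real.exp (y θ)) := by
    refine ⟨hs, fun x hx z hz hxz a b ha hb hab => ?_⟩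
    obtain ⟨θ₀, hθ₀⟩ := Function.ne_iff.1 hxz
    simp only [Pi.add_apply, Pi.smul_apply, smul_eq_mul]
    have hle : ∀ θ ∈ Finset.univ (α := Θ), τ θ * Real.exp (a * x θ + b * z θ)
        ≤ a * (τ θ * Real.exp (x θ)) + b * (τ θ * Real.exp (z θ)) := by
      intro θ _
      have := convexOn_exp.2 (Set.mem_univ (x θ)) (Set.mem_univ (z θ)) ha.le hb.le hab
      simp only [smul_eq_mul] at this
      nlinarith [(hτ θ).le, this]
    have hlt : τ θ₀ * Real.exp (a * x θ₀ + b * z θ₀)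
        < a * (τ θ₀ * Real.exp (x θ₀)) + b * (τ θ₀ * Real.exp (z θ₀)) := by
      have := strictConvexOn_exp.2 (Set.mem_univ (x θ₀)) (Set.mem_univ (z θ₀)) hθ₀ ha hb hab
      simp only [smul_eq_mul] at this
      nlinarith [hτ θ₀, this]
    calc ∑ θ : Θ, τ θ * Real.exp (a * x θ + b * z θ)
        < ∑ θ : Θ, (a * (τ θ * Real.exp (x θ)) + b * (τ θ * Real.exp (z θ))) :=
          Finset.sum_lt_sum hle ⟨θ₀, Finset.mem_univ θ₀, hlt⟩
      _ = a * ∑ θ : Θ, τ θ * Real.exp (x θ) + b * ∑ θ : Θ, τ θ * Real.exp (z θ) := by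
          rw [Finset.sum_add_distrib, ← Finset.mul_sum, ← Finset.mul_sum]
  exact (h1.add h2).add_strictConvexOn h3
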